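/- For every natural number m and every sign ε ∈ {1,−1}, the smooth function φ = φ^ε_m : ℝ⁴ → ℂ satisfies, at every point (x,y,z,w) ∈ ℝ⁴, the identity 2πi·(xw − yz)·φ(x,y,z,w) − (1/(2πi))·( (∂²φ/∂z∂y)(x,y,z,w) − (∂²φ/∂w∂x)(x,y,z,w) ) = −i·m·ε·φ(x,y,z,w). (This expresses that φ^ε_m is an eigenvector, with eigenvalue −imε, of the infinitesimal action in the Weil representation of the compact generator (0 1; −1 0) of 𝔰𝔩₂(ℝ), whose action is 2πi(xw−yz) minus (1/2πi)(∂²/∂z∂y − ∂²/∂w∂x).) -/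

import Mathlib

open Complex Real

/-- The Schwartz function `φ^ε_m(x,y,z,w) = (x + εiy + iz − εw)^m · exp(−π(x²+y²+z²+w²))`,
written as a curried function of four real variables. -/
noncomputable def phiEps (m : ℕ) (ε : ℝ) (x y z w : ℝ) : ℂ :=
  ((x : ℂ) + (ε : ℂ) * Complex.I * (y : ℂ) + Complex.I * (z : ℂ) - (ε : ℂ) * (w : ℂ)) ^ m *
    Complex.exp (-(π : ℂ) * ((x ^ 2 + y ^ 2 + z ^ 2 + w ^ 2 : ℝ) : ℂ))

lemma FD (k : ℕ) (A B C D : ℂ) (t : ℝ) :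
    HasDerivAt (fun s : ℝ => (A + B * (s : ℂ)) ^ k * Complex.exp (C + D * (s : ℂ) ^ 2))
      ((k : ℂ) * (A + B * (t : ℂ)) ^ (k - 1) * B * Complex.exp (C + D * (t : ℂ) ^ 2)
        + (A + B * (t : ℂ)) ^ k * (Complex.exp (C + D * (t : ℂ) ^ 2) * (D * (2 * (t : ℂ))))) t := by
  have h1 : HasDerivAt (fun ζ : ℂ => (A + B * ζ) ^ k)
      ((k : ℂ) * (A + B * (t : ℂ)) ^ (k - 1) * B) (t : ℂ) := by
    have hb : HasDerivAt (fun ζ : ℂ => A + B * ζ) B (t:ℂ) := by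
      simpa using ((hasDerivAt_id (t:ℂ)).const_mul B).const_add A
    simpa using hb.fun_pow k
  have h2 : HasDerivAt (fun ζ : ℂ => Complex.exp (C + D * ζ ^ 2))
      (Complex.exp (C + D * (t:ℂ) ^ 2) * (D * (2 * (t:ℂ)))) (t:ℂ) := by
    have hq : HasDerivAt (fun ζ : ℂ => C + D * ζ ^ 2) (D * (2 * (t:ℂ))) (t:ℂ) := by
      simpa [mul_comm] using (((hasDerivAt_id (t:ℂ)).pow 2).const_mul D).const_add C
    exact hq.cexp
  simpa using (h1.mul h2).comp_ofReal

/-- `φ^ε_m` is an eigenvector, with eigenvalue `−imε`, of the infinitesimal Weil-representation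
action `2πi(xw−yz) − (1/(2πi))(∂²/∂z∂y − ∂²/∂w∂x)` of the compact generator `(0 1; −1 0)`
of `𝔰𝔩₂(ℝ)`. -/
theorem phiEps_weil_eigenvector (m : ℕ) (ε : ℝ) (hε : ε = 1 ∨ ε = -1) (x y z w : ℝ) :
    2 * (π : ℂ) * Complex.I * ((x * w - y * z : ℝ) : ℂ) * phiEps m ε x y z w -
      (1 / (2 * (π : ℂ) * Complex.I)) *
        (deriv (fun z' : ℝ => deriv (fun y' : ℝ => phiEps m ε x y' z' w) y) z -
         deriv (fun w' : ℝ => deriv (fun x' : ℝ => phiEps m ε x' y z w') x) w) =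
      -Complex.I * (m : ℂ) * (ε : ℂ) * phiEps m ε x y z w := by
  have hπ : (π : ℂ) ≠ 0 := by exact_mod_cast Real.pi_ne_zero
  have hy : ∀ z' : ℝ, deriv (fun y' : ℝ => phiEps m ε x y' z' w) y =
      (m : ℂ) * (((x:ℂ) + Complex.I*(z':ℂ) - (ε:ℂ)*(w:ℂ)) + ((ε:ℂ)*Complex.I) * (y:ℂ)) ^ (m-1) * ((ε:ℂ)*Complex.I)
        * Complex.exp ((-(π:ℂ)*((x:ℂ)^2+(z':ℂ)^2+(w:ℂ)^2)) + (-(π:ℂ)) * (y:ℂ)^2)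
      + (((x:ℂ) + Complex.I*(z':ℂ) - (ε:ℂ)*(w:ℂ)) + ((ε:ℂ)*Complex.I) * (y:ℂ)) ^ m
        * (Complex.exp ((-(π:ℂ)*((x:ℂ)^2+(z':ℂ)^2+(w:ℂ)^2)) + (-(π:ℂ)) * (y:ℂ)^2) * ((-(π:ℂ)) * (2*(y:ℂ)))) := by
    intro z'
    have hfun : (fun y' : ℝ => phiEps m ε x y' z' w) =
        fun y' : ℝ => (((x:ℂ) + Complex.I*(z':ℂ) - (ε:ℂ)*(w:ℂ)) + ((ε:ℂ)*Complex.I) * (y':ℂ)) ^ m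
          * Complex.exp ((-(π:ℂ)*((x:ℂ)^2+(z':ℂ)^2+(w:ℂ)^2)) + (-(π:ℂ)) * (y':ℂ)^2) := by
      funext y'
      simp only [phiEps]
      push_cast
      rw [show (x:ℂ) + (ε:ℂ)*Complex.I*(y':ℂ) + Complex.I*(z':ℂ) - (ε:ℂ)*(w:ℂ)
          = ((x:ℂ) + Complex.I*(z':ℂ) - (ε:ℂ)*(w:ℂ)) + ((ε:ℂ)*Complex.I)*(y':ℂ) from by ring]
      congr 1
      congr 1
      ring
    rw [hfun]
    exact (FD m _ _ _ _ y).deriv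
  have hx : ∀ w' : ℝ, deriv (fun x' : ℝ => phiEps m ε x' y z w') x =
      (m : ℂ) * (((ε:ℂ)*Complex.I*(y:ℂ) + Complex.I*(z:ℂ) - (ε:ℂ)*(w':ℂ)) + 1 * (x:ℂ)) ^ (m-1) * 1
        * Complex.exp ((-(π:ℂ)*((y:ℂ)^2+(z:ℂ)^2+(w':ℂ)^2)) + (-(π:ℂ)) * (x:ℂ)^2)
      + (((ε:ℂ)*Complex.I*(y:ℂ) + Complex.I*(z:ℂ) - (ε:ℂ)*(w':ℂ)) + 1 * (x:ℂ)) ^ m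
        * (Complex.exp ((-(π:ℂ)*((y:ℂ)^2+(z:ℂ)^2+(w':ℂ)^2)) + (-(π:ℂ)) * (x:ℂ)^2) * ((-(π:ℂ)) * (2*(x:ℂ)))) := by
    intro w'
    have hfun : (fun x' : ℝ => phiEps m ε x' y z w') =
        fun x' : ℝ => (((ε:ℂ)*Complex.I*(y:ℂ) + Complex.I*(z:ℂ) - (ε:ℂ)*(w':ℂ)) + 1 * (x':ℂ)) ^ m
          * Complex.exp ((-(π:ℂ)*((y:ℂ)^2+(z:ℂ)^2+(w':ℂ)^2)) + (-(π:ℂ)) * (x':ℂ)^2) := by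
      funext x'
      simp only [phiEps]
      push_cast
      rw [show (x':ℂ) + (ε:ℂ)*Complex.I*(y:ℂ) + Complex.I*(z:ℂ) - (ε:ℂ)*(w':ℂ)
          = ((ε:ℂ)*Complex.I*(y:ℂ) + Complex.I*(z:ℂ) - (ε:ℂ)*(w':ℂ)) + 1*(x':ℂ) from by ring]
      congr 1
      congr 1
      ring
    rw [hfun]
    exact (FD m _ _ _ _ x).deriv
  -- second derivative ∂z ∂y
  have hfzy : (fun z' : ℝ => deriv (fun y' : ℝ => phiEps m ε x y' z' w) y) =
      fun z' : ℝ =>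
        ((m:ℂ) * ((ε:ℂ)*Complex.I)) *
          ( (((x:ℂ) + (ε:ℂ)*Complex.I*(y:ℂ) - (ε:ℂ)*(w:ℂ)) + Complex.I * (z':ℂ)) ^ (m-1)
            * Complex.exp ((-(π:ℂ)*((x:ℂ)^2+(y:ℂ)^2+(w:ℂ)^2)) + (-(π:ℂ)) * (z':ℂ)^2) )
        + (-(2*(π:ℂ)*(y:ℂ))) *
          ( (((x:ℂ) + (ε:ℂ)*Complex.I*(y:ℂ) - (ε:ℂ)*(w:ℂ)) + Complex.I * (z':ℂ)) ^ m
            * Complex.exp ((-(π:ℂ)*((x:ℂ)^2+(y:ℂ)^2+(w:ℂ)^2)) + (-(π:ℂ)) * (z':ℂ)^2) ) := by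
    funext z'
    rw [hy z']
    rw [show Complex.exp ((-(π:ℂ)*((x:ℂ)^2+(z':ℂ)^2+(w:ℂ)^2)) + (-(π:ℂ)) * (y:ℂ)^2)
        = Complex.exp ((-(π:ℂ)*((x:ℂ)^2+(y:ℂ)^2+(w:ℂ)^2)) + (-(π:ℂ)) * (z':ℂ)^2) from by congr 1; ring]
    ring
  have hfwx : (fun w' : ℝ => deriv (fun x' : ℝ => phiEps m ε x' y z w') x) =
      fun w' : ℝ =>
        (m:ℂ) *
          ( (((x:ℂ) + (ε:ℂ)*Complex.I*(y:ℂ) + Complex.I*(z:ℂ)) + (-(ε:ℂ)) * (w':ℂ)) ^ (m-1)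
            * Complex.exp ((-(π:ℂ)*((x:ℂ)^2+(y:ℂ)^2+(z:ℂ)^2)) + (-(π:ℂ)) * (w':ℂ)^2) )
        + (-(2*(π:ℂ)*(x:ℂ))) *
          ( (((x:ℂ) + (ε:ℂ)*Complex.I*(y:ℂ) + Complex.I*(z:ℂ)) + (-(ε:ℂ)) * (w':ℂ)) ^ m
            * Complex.exp ((-(π:ℂ)*((x:ℂ)^2+(y:ℂ)^2+(z:ℂ)^2)) + (-(π:ℂ)) * (w':ℂ)^2) ) := by
    funext w'
    rw [hx w']
    rw [show Complex.exp ((-(π:ℂ)*((y:ℂ)^2+(z:ℂ)^2+(w':ℂ)^2)) + (-(π:ℂ)) * (x:ℂ)^2)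
        = Complex.exp ((-(π:ℂ)*((x:ℂ)^2+(y:ℂ)^2+(z:ℂ)^2)) + (-(π:ℂ)) * (w':ℂ)^2) from by congr 1; ring]
    ring
  rw [hfzy, hfwx,
    (((FD (m-1) ((x:ℂ) + (ε:ℂ)*Complex.I*(y:ℂ) - (ε:ℂ)*(w:ℂ)) Complex.I
        (-(π:ℂ)*((x:ℂ)^2+(y:ℂ)^2+(w:ℂ)^2)) (-(π:ℂ)) z).const_mul ((m:ℂ) * ((ε:ℂ)*Complex.I))).fun_add
      ((FD m ((x:ℂ) + (ε:ℂ)*Complex.I*(y:ℂ) - (ε:ℂ)*(w:ℂ)) Complex.I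
        (-(π:ℂ)*((x:ℂ)^2+(y:ℂ)^2+(w:ℂ)^2)) (-(π:ℂ)) z).const_mul (-(2*(π:ℂ)*(y:ℂ))))).deriv,
    (((FD (m-1) ((x:ℂ) + (ε:ℂ)*Complex.I*(y:ℂ) + Complex.I*(z:ℂ)) (-(ε:ℂ))
        (-(π:ℂ)*((x:ℂ)^2+(y:ℂ)^2+(z:ℂ)^2)) (-(π:ℂ)) w).const_mul (m:ℂ)).fun_add
      ((FD m ((x:ℂ) + (ε:ℂ)*Complex.I*(y:ℂ) + Complex.I*(z:ℂ)) (-(ε:ℂ))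
        (-(π:ℂ)*((x:ℂ)^2+(y:ℂ)^2+(z:ℂ)^2)) (-(π:ℂ)) w).const_mul (-(2*(π:ℂ)*(x:ℂ))))).deriv]
  simp only [phiEps]
  push_cast
  rw [show Complex.exp ((-(π:ℂ)*((x:ℂ)^2+(y:ℂ)^2+(w:ℂ)^2)) + (-(π:ℂ)) * (z:ℂ)^2)
      = Complex.exp (-(π:ℂ)*((x:ℂ)^2+(y:ℂ)^2+(z:ℂ)^2+(w:ℂ)^2)) from by congr 1; ring,
    show Complex.exp ((-(π:ℂ)*((x:ℂ)^2+(y:ℂ)^2+(z:ℂ)^2)) + (-(π:ℂ)) * (w:ℂ)^2)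
      = Complex.exp (-(π:ℂ)*((x:ℂ)^2+(y:ℂ)^2+(z:ℂ)^2+(w:ℂ)^2)) from by congr 1; ring]
  generalize Complex.exp (-(π:ℂ)*((x:ℂ)^2+(y:ℂ)^2+(z:ℂ)^2+(w:ℂ)^2)) = E
  rcases hε with rfl | rfl
  · push_cast
    rcases m with _ | n
    · field_simp
      linear_combination (4*(π:ℂ)^2*((x:ℂ)*(w:ℂ)-(y:ℂ)*(z:ℂ))*E) * Complex.I_sq
    · simp only [Nat.add_sub_cancel, Nat.cast_add, Nat.cast_one]
      field_simp
      linear_combination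
        (2*(π:ℂ)*((n:ℂ)+1)*E*((x:ℂ) + Complex.I*(y:ℂ) + Complex.I*(z:ℂ) - (w:ℂ))^(n+1)
          + 4*(π:ℂ)^2*E*((x:ℂ) + Complex.I*(y:ℂ) + Complex.I*(z:ℂ) - (w:ℂ))^n *
            (Complex.I*((x:ℂ)*(w:ℂ)*(y:ℂ) + (x:ℂ)*(w:ℂ)*(z:ℂ) - (y:ℂ)*(z:ℂ)^2 - (y:ℂ)^2*(z:ℂ))
              + ((x:ℂ)^2*(w:ℂ) - (x:ℂ)*(w:ℂ)^2 - (x:ℂ)*(y:ℂ)*(z:ℂ) + (w:ℂ)*(y:ℂ)*(z:ℂ)))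
          - (n:ℂ)*((n:ℂ)+1)*E*((x:ℂ) + Complex.I*(y:ℂ) + Complex.I*(z:ℂ) - (w:ℂ))^(n-1)) * Complex.I_sq
  · push_cast
    rcases m with _ | n
    · field_simp
      linear_combination (4*(π:ℂ)^2*((x:ℂ)*(w:ℂ)-(y:ℂ)*(z:ℂ))*E) * Complex.I_sq
    · simp only [Nat.add_sub_cancel, Nat.cast_add, Nat.cast_one]
      field_simp
      linear_combination
        (-2*(π:ℂ)*((n:ℂ)+1)*E*((x:ℂ) - Complex.I*(y:ℂ) + Complex.I*(z:ℂ) + (w:ℂ))^(n+1)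
          + 4*(π:ℂ)^2*E*((x:ℂ) - Complex.I*(y:ℂ) + Complex.I*(z:ℂ) + (w:ℂ))^n *
            (Complex.I*(-(x:ℂ)*(w:ℂ)*(y:ℂ) + (x:ℂ)*(w:ℂ)*(z:ℂ) - (y:ℂ)*(z:ℂ)^2 + (y:ℂ)^2*(z:ℂ))
              + ((x:ℂ)*(w:ℂ)^2 - (x:ℂ)*(y:ℂ)*(z:ℂ) + (x:ℂ)^2*(w:ℂ) - (w:ℂ)*(y:ℂ)*(z:ℂ)))
          + (n:ℂ)*((n:ℂ)+1)*E*((x:ℂ) - Complex.I*(y:ℂ) + Complex.I*(z:ℂ) + (w:ℂ))^(n-1)) * Complex.I_sq
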